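/- (Dantzig selector error bound, deterministic part) Let X̃ be an n×p matrix with δ = δ_{2S}(X̃), θ = θ_{S,2S}(X̃), δ + θ < 1. Let β ∈ ℝᵖ, let T₀ be the index set of the S largest-magnitude entries of β, and suppose β̃ is a minimizer of ‖b‖₁ subject to ‖X̃ᵀ(y - X̃b)‖_∞ ≤ λσ where y = X̃β + e and ‖X̃ᵀe‖_∞ ≤ λσ. Then, with h = β̃ - β, ‖h‖₂ ≤ (4√2/(1-δ-θ))·S^{1/2}·λσ + 2·((1-δ+θ)/(1-δ-θ))·S^{-1/2}·‖β_{T₀ᶜ}‖₁. -/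

import Mathlib

open Matrix

/-- sqrt(a+b) ≤ sqrt a + sqrt b -/
lemma my_sqrt_add_le (a b : ℝ) (ha : 0 ≤ a) (hb : 0 ≤ b) :
    Real.sqrt (a + b) ≤ Real.sqrt a + Real.sqrt b := by
  have h1 := Real.sq_sqrt ha
  have h2 := Real.sq_sqrt hb
  have h3 := Real.sqrt_nonneg a
  have h4 := Real.sqrt_nonneg b
  have : a + b ≤ (Real.sqrt a + Real.sqrt b) ^ 2 := by nlinarith
  calc Real.sqrt (a + b) ≤ Real.sqrt ((Real.sqrt a + Real.sqrt b) ^ 2) :=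
        Real.sqrt_le_sqrt this
    _ = Real.sqrt a + Real.sqrt b := Real.sqrt_sq (by positivity)

noncomputable def dsBlockSum {ι : Type*} (u : ι → ℝ) (S : ℕ) : List ι → ℝ
  | [] => 0
  | x :: xs => Real.sqrt ((((x :: xs).take S).map (fun y => u y ^ 2)).sum)
      + dsBlockSum u S (xs.drop (S - 1))
termination_by L => L.length
decreasing_by simp [List.length_drop]

lemma dsBlockSum_nil {ι : Type*} (u : ι → ℝ) (S : ℕ) : dsBlockSum u S ([] : List ι) = 0 := by
  simp [dsBlockSum]

lemma dsBlockSum_cons {ι : Type*} (u : ι → ℝ) {S : ℕ} (hS : 0 < S) (x : ι) (xs : List ι) :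
    dsBlockSum u S (x :: xs) =
      Real.sqrt ((((x :: xs).take S).map (fun y => u y ^ 2)).sum)
        + dsBlockSum u S ((x :: xs).drop S) := by
  obtain ⟨S, rfl⟩ := Nat.exists_eq_add_of_lt hS
  simp only [dsBlockSum, Nat.zero_add, Nat.add_sub_cancel, List.drop_succ_cons]

lemma dsBlockSum_nonneg {ι : Type*} (u : ι → ℝ) (S : ℕ) (L : List ι) :
    0 ≤ dsBlockSum u S L := by
  match L with
  | [] => simp [dsBlockSum]
  | x :: xs =>
    have ih := dsBlockSum_nonneg u S (xs.drop (S - 1))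
    have := Real.sqrt_nonneg ((((x :: xs).take S).map (fun y => u y ^ 2)).sum)
    unfold dsBlockSum
    linarith
termination_by L.length
decreasing_by simp [List.length_drop]

/-- ℓ² of the whole list is at most the sum of blockwise ℓ² norms. -/
lemma dsBlockSum_ge {ι : Type*} (u : ι → ℝ) {S : ℕ} (hS : 0 < S) (L : List ι) :
    Real.sqrt ((L.map (fun y => u y ^ 2)).sum) ≤ dsBlockSum u S L := by
  match L with
  | [] => simp [dsBlockSum]
  | x :: xs =>
    rw [dsBlockSum_cons u hS]
    have ih := dsBlockSum_ge u hS ((x :: xs).drop S)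
    have hsplit : ((x :: xs).map (fun y => u y ^ 2)).sum
        = (((x :: xs).take S).map (fun y => u y ^ 2)).sum
          + (((x :: xs).drop S).map (fun y => u y ^ 2)).sum := by
      rw [← List.sum_append, ← List.map_append, List.take_append_drop]
    rw [hsplit]
    have h1 : 0 ≤ (((x :: xs).take S).map (fun y => u y ^ 2)).sum :=
      List.sum_nonneg (fun a ha => by obtain ⟨y, _, rfl⟩ := List.mem_map.1 ha; positivity)
    have h2 : 0 ≤ (((x :: xs).drop S).map (fun y => u y ^ 2)).sum :=
      List.sum_nonneg (fun a ha => by obtain ⟨y, _, rfl⟩ := List.mem_map.1 ha; positivity)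
    calc Real.sqrt _ ≤ Real.sqrt (((x :: xs).take S).map (fun y => u y ^ 2)).sum
          + Real.sqrt (((x :: xs).drop S).map (fun y => u y ^ 2)).sum :=
        my_sqrt_add_le _ _ h1 h2
      _ ≤ _ := by linarith
termination_by L.length
decreasing_by simp; omega

/-- Shifting inequality: sum of blockwise ℓ² norms of the tail is at most ‖·‖₁/√S. -/
lemma dsBlockSum_le {ι : Type*} (u : ι → ℝ) (hu : ∀ i, 0 ≤ u i) {S : ℕ} (hS : 0 < S)
    (L : List ι) (hsort : L.Pairwise (fun a b => u b ≤ u a)) :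
    dsBlockSum u S (L.drop S) * Real.sqrt S ≤ (L.map u).sum := by
  have hsum_nonneg : ∀ M : List ι, 0 ≤ (M.map u).sum := fun M =>
    List.sum_nonneg (fun a ha => by obtain ⟨y, _, rfl⟩ := List.mem_map.1 ha; exact hu y)
  rcases e : L.drop S with _ | ⟨x, xs⟩
  · rw [dsBlockSum_nil]
    simpa using hsum_nonneg L
  · -- L.length > S, so take S L has length S
    have hlen : S < L.length := by
      by_contra hc
      push_neg at hc
      have : L.drop S = [] := List.drop_eq_nil_of_le hc
      rw [this] at e; simp at e
    have htake_len : (L.take S).length = S := by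
      rw [List.length_take]; omega
    -- cross inequality
    have hcross : ∀ y ∈ L.drop S, ∀ z ∈ L.take S, u y ≤ u z := by
      have hsort2 : (L.take S ++ L.drop S).Pairwise (fun a b => u b ≤ u a) := by
        rw [List.take_append_drop]; exact hsort
      have h2 := (List.pairwise_append.1 hsort2).2.2
      intro y hy z hz; exact h2 z hz y hy
    set c : ℝ := ((L.take S).map u).sum with hc
    have hc0 : 0 ≤ c := hsum_nonneg _
    have hyc : ∀ y ∈ L.drop S, u y * S ≤ c := by
      intro y hy
      have : ((L.take S).map (fun _ => u y)).sum ≤ ((L.take S).map u).sum :=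
        List.sum_le_sum (fun z hz => hcross y hy z hz)
      have hconst : ((L.take S).map (fun _ => u y)).sum = (L.take S).length * u y := by
        induction (L.take S) with
        | nil => simp
        | cons a l ihl => simp [ihl]; ring
      rw [hconst, htake_len] at this
      rw [mul_comm]; exact this
    -- the head block of L.drop S
    set B : ℝ := (((L.drop S).take S).map (fun y => u y ^ 2)).sum with hB
    have hB0 : 0 ≤ B :=
      List.sum_nonneg (fun a ha => by obtain ⟨y, _, rfl⟩ := List.mem_map.1 ha; positivity)
    have hSR : (0:ℝ) < S := by exact_mod_cast hS
    have hBbound : B * S ≤ c ^ 2 := by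
      have hterm : ∀ y ∈ (L.drop S).take S, u y ^ 2 ≤ (c / S) ^ 2 := by
        intro y hy
        have hy' : y ∈ L.drop S := List.mem_of_mem_take hy
        have h1 : u y ≤ c / S := by
          rw [le_div_iff₀ hSR]; exact hyc y hy'
        exact pow_le_pow_left₀ (hu y) h1 2
      have hlen2 : ((L.drop S).take S).length ≤ S := by
        simpa using List.length_take_le S (L.drop S)
      have : B ≤ (((L.drop S).take S).map (fun _ => (c/S)^2)).sum :=
        List.sum_le_sum (fun y hy => hterm y hy)
      have h2 : (((L.drop S).take S).map (fun _ => (c/S)^2)).sum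
          = ((L.drop S).take S).length * (c/S)^2 := by
        induction ((L.drop S).take S) with
        | nil => simp
        | cons a l ihl => simp [ihl]; ring
      have h3 : (((L.drop S).take S).length : ℝ) * (c/S)^2 ≤ S * (c/S)^2 := by
        apply mul_le_mul_of_nonneg_right _ (by positivity)
        exact_mod_cast hlen2
      have h4 : (S:ℝ) * (c/S)^2 * S = c ^ 2 := by
        field_simp
      nlinarith [this]
    have hhead : Real.sqrt B * Real.sqrt S ≤ c := by
      rw [← Real.sqrt_mul hB0]
      calc Real.sqrt (B * S) ≤ Real.sqrt (c ^ 2) := Real.sqrt_le_sqrt hBbound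
        _ = c := Real.sqrt_sq hc0
    -- induction on L.drop S
    have hsort' : (L.drop S).Pairwise (fun a b => u b ≤ u a) :=
      hsort.sublist (List.drop_sublist S L)
    have ih := dsBlockSum_le u hu hS (L.drop S) hsort'
    -- unfold dsBlockSum on L.drop S
    have hunfold : dsBlockSum u S (L.drop S)
        = Real.sqrt B + dsBlockSum u S ((L.drop S).drop S) := by
      rw [e, dsBlockSum_cons u hS, ← e, hB]
    have hsplit : (L.map u).sum = c + ((L.drop S).map u).sum := by
      rw [hc, ← List.sum_append, ← List.map_append, List.take_append_drop]
    rw [← e, hunfold, hsplit, add_mul]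
    have := dsBlockSum_nonneg u S ((L.drop S).drop S)
    nlinarith [Real.sqrt_nonneg (S:ℝ), ih]
termination_by L.length
decreasing_by simp; omega

noncomputable def dsRestrict {ι : Type*} [DecidableEq ι] (h : ι → ℝ) (M : List ι) : ι → ℝ :=
  fun i => if i ∈ M then h i else 0

lemma dsRestrict_sumsq {ι : Type*} [Fintype ι] [DecidableEq ι] (h : ι → ℝ) {M : List ι}
    (hnd : M.Nodup) :
    ∑ i, (dsRestrict h M i) ^ 2 = (M.map (fun y => |h y| ^ 2)).sum := by
  have h1 : ∑ i, (dsRestrict h M i) ^ 2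
      = ∑ i, (if i ∈ M.toFinset then h i ^ 2 else 0) := by
    apply Finset.sum_congr rfl
    intro i _
    by_cases hi : i ∈ M <;> simp [dsRestrict, hi]
  rw [h1, Finset.sum_ite_mem, Finset.univ_inter, List.sum_toFinset _ hnd]
  congr 1
  apply List.map_congr_left
  intro y _
  rw [sq_abs]

lemma dsRestrict_split {ι : Type*} [DecidableEq ι] (h : ι → ℝ) (S : ℕ) {M : List ι}
    (hnd : M.Nodup) :
    dsRestrict h M = dsRestrict h (M.take S) + dsRestrict h (M.drop S) := by
  have hnd2 : (M.take S ++ M.drop S).Nodup := by rw [List.take_append_drop]; exact hnd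
  have hdisj := (List.nodup_append.1 hnd2).2.2
  funext i
  have hmem : i ∈ M ↔ i ∈ M.take S ∨ i ∈ M.drop S := by
    conv_lhs => rw [← List.take_append_drop S M]
    exact List.mem_append
  simp only [dsRestrict, Pi.add_apply]
  by_cases h1 : i ∈ M.take S
  · have h2 : i ∉ M.drop S := fun h => hdisj i h1 i h rfl
    simp [h1, h2, hmem.2 (Or.inl h1)]
  · by_cases h2 : i ∈ M.drop S
    · simp [h1, h2, hmem.2 (Or.inr h2)]
    · have : i ∉ M := fun hi => by rcases hmem.1 hi with h | h <;> [exact h1 h; exact h2 h]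
      simp [h1, h2, this]

lemma dsInner_bound {n p : ℕ} (Xt : Matrix (Fin n) (Fin p) ℝ) (h w : Fin p → ℝ)
    {S : ℕ} (hS : 0 < S) (θ C : ℝ)
    (W : Finset (Fin p))
    (hRO' : ∀ (b : Fin p → ℝ) (T : Finset (Fin p)), Disjoint T W → T.card ≤ S →
      (∀ i ∉ T, b i = 0) →
      |∑ j, Xt.mulVec b j * Xt.mulVec w j| ≤ θ * Real.sqrt (∑ i, b i ^ 2) * C)
    (M : List (Fin p)) (hnd : M.Nodup) (hMW : ∀ x ∈ M, x ∉ W) :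
    |∑ j, Xt.mulVec (dsRestrict h M) j * Xt.mulVec w j|
      ≤ θ * dsBlockSum (fun i => |h i|) S M * C := by
  match M with
  | [] =>
    have h0 : dsRestrict h ([] : List (Fin p)) = 0 := by funext i; simp [dsRestrict]
    rw [h0, dsBlockSum_nil]
    simp [Matrix.mulVec_zero]
  | x :: xs =>
    set M := x :: xs with hM
    rw [dsRestrict_split h S hnd, Matrix.mulVec_add]
    have hsum : ∑ j, (Xt.mulVec (dsRestrict h (M.take S)) + Xt.mulVec (dsRestrict h (M.drop S))) j
          * Xt.mulVec w j
        = (∑ j, Xt.mulVec (dsRestrict h (M.take S)) j * Xt.mulVec w j)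
          + ∑ j, Xt.mulVec (dsRestrict h (M.drop S)) j * Xt.mulVec w j := by
      rw [← Finset.sum_add_distrib]
      apply Finset.sum_congr rfl
      intro j _
      simp [add_mul]
    rw [hsum]
    have hbound1 : |∑ j, Xt.mulVec (dsRestrict h (M.take S)) j * Xt.mulVec w j|
        ≤ θ * Real.sqrt (((M.take S).map (fun y => |h y| ^ 2)).sum) * C := by
      have hnd1 : (M.take S).Nodup := hnd.sublist (List.take_sublist _ _)
      have := hRO' (dsRestrict h (M.take S)) (M.take S).toFinset
        (Finset.disjoint_left.2 fun i hi => hMW i (List.mem_of_mem_take (List.mem_toFinset.1 hi)))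
        (le_trans (List.toFinset_card_le _) (by simpa using List.length_take_le S M))
        (fun i hi => by simp only [dsRestrict]; rw [if_neg (fun hc => hi (List.mem_toFinset.2 hc))])
      rwa [dsRestrict_sumsq h hnd1] at this
    have hbound2 : |∑ j, Xt.mulVec (dsRestrict h (M.drop S)) j * Xt.mulVec w j|
        ≤ θ * dsBlockSum (fun i => |h i|) S (M.drop S) * C := by
      apply dsInner_bound Xt h w hS θ C W hRO'
      · exact hnd.sublist (List.drop_sublist _ _)
      · exact fun x hx => hMW x (List.mem_of_mem_drop hx)
    calc |_ + _| ≤ _ := abs_add_le _ _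
      _ ≤ θ * Real.sqrt (((M.take S).map (fun y => |h y| ^ 2)).sum) * C
            + θ * dsBlockSum (fun i => |h i|) S (M.drop S) * C := add_le_add hbound1 hbound2
      _ = θ * dsBlockSum (fun i => |h i|) S M * C := by
          rw [hM, dsBlockSum_cons _ hS, ← hM]; ring
termination_by M.length
decreasing_by simp; omega

lemma ds_sum_ite_sq {ι : Type*} [Fintype ι] [DecidableEq ι] (T : Finset ι) (d : ι → ℝ) :
    ∑ i, (if i ∈ T then d i else 0) ^ 2 = ∑ i ∈ T, d i ^ 2 := by
  have h1 : ∑ i, (if i ∈ T then d i else 0) ^ 2 = ∑ i, (if i ∈ T then d i ^ 2 else 0) :=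
    Finset.sum_congr rfl (fun i _ => by by_cases hi : i ∈ T <;> simp [hi])
  rw [h1, Finset.sum_ite_mem, Finset.univ_inter]

lemma ds_sum_ite_mul {ι : Type*} [Fintype ι] [DecidableEq ι] (T : Finset ι) (g d : ι → ℝ) :
    ∑ i, g i * (if i ∈ T then d i else 0) = ∑ i ∈ T, g i * d i := by
  have h1 : ∑ i, g i * (if i ∈ T then d i else 0) = ∑ i, (if i ∈ T then g i * d i else 0) :=
    Finset.sum_congr rfl (fun i _ => by by_cases hi : i ∈ T <;> simp [hi])
  rw [h1, Finset.sum_ite_mem, Finset.univ_inter]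

lemma ds_cs_l1 {ι : Type*} (T : Finset ι) (d : ι → ℝ) :
    ∑ i ∈ T, |d i| ≤ Real.sqrt T.card * Real.sqrt (∑ i ∈ T, d i ^ 2) := by
  have h := Finset.sum_mul_sq_le_sq_mul_sq T (fun i => |d i|) (fun _ => 1)
  simp only [mul_one, one_pow] at h
  have habs : ∑ i ∈ T, |d i| ^ 2 = ∑ i ∈ T, d i ^ 2 :=
    Finset.sum_congr rfl (fun i _ => sq_abs _)
  rw [habs, Finset.sum_const, nsmul_eq_mul, mul_one] at h
  have h0 : 0 ≤ ∑ i ∈ T, |d i| := Finset.sum_nonneg (fun i _ => abs_nonneg _)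
  calc ∑ i ∈ T, |d i| = Real.sqrt ((∑ i ∈ T, |d i|) ^ 2) := (Real.sqrt_sq h0).symm
    _ ≤ Real.sqrt ((∑ i ∈ T, d i ^ 2) * T.card) := Real.sqrt_le_sqrt (by linarith)
    _ = Real.sqrt T.card * Real.sqrt (∑ i ∈ T, d i ^ 2) := by
        rw [Real.sqrt_mul (Finset.sum_nonneg (fun i _ => sq_nonneg _)), mul_comm]

theorem dantzig_selector_error_bound (n p S : ℕ) (hS : 0 < S)
    (δ θ lam σ : ℝ) (hδ0 : 0 ≤ δ) (hθ0 : 0 ≤ θ) (hsum : δ + θ < 1)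
    (hlam : 0 < lam) (hσ : 0 < σ)
    (Xt : Matrix (Fin n) (Fin p) ℝ)
    (hRIP : ∀ b : Fin p → ℝ, (Finset.univ.filter fun i => b i ≠ 0).card ≤ 2 * S →
      (1 - δ) * ∑ i, (b i) ^ 2 ≤ ∑ j, (Xt.mulVec b j) ^ 2 ∧
      ∑ j, (Xt.mulVec b j) ^ 2 ≤ (1 + δ) * ∑ i, (b i) ^ 2)
    (hRO : ∀ (b b' : Fin p → ℝ) (T T' : Finset (Fin p)), Disjoint T T' →
      T.card ≤ S → T'.card ≤ 2 * S →
      (∀ i ∉ T, b i = 0) → (∀ i ∉ T', b' i = 0) →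
      |∑ j, Xt.mulVec b j * Xt.mulVec b' j| ≤
        θ * Real.sqrt (∑ i, (b i) ^ 2) * Real.sqrt (∑ i, (b' i) ^ 2))
    (β : Fin p → ℝ) (y : Fin n → ℝ) (eN : Fin n → ℝ)
    (hy : y = Xt.mulVec β + eN)
    (hnoise : ∀ i, |Xtᵀ.mulVec eN i| ≤ lam * σ)
    -- T₀ is the set of the S largest-magnitude entries of β
    (T0 : Finset (Fin p)) (hT0card : T0.card = S)
    (hT0 : ∀ i ∈ T0, ∀ j ∉ T0, |β j| ≤ |β i|)
    -- β̃ minimizes the ℓ₁ norm subject to the Dantzig constraint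
    (βt : Fin p → ℝ)
    (hfeas : ∀ i, |Xtᵀ.mulVec (y - Xt.mulVec βt) i| ≤ lam * σ)
    (hmin : ∀ b : Fin p → ℝ, (∀ i, |Xtᵀ.mulVec (y - Xt.mulVec b) i| ≤ lam * σ) →
      ∑ i, |βt i| ≤ ∑ i, |b i|) :
    Real.sqrt (∑ i, (βt i - β i) ^ 2) ≤
      (4 * Real.sqrt 2 / (1 - δ - θ)) * Real.sqrt S * (lam * σ) +
        2 * ((1 - δ + θ) / (1 - δ - θ)) * (Real.sqrt S)⁻¹ * ∑ i ∈ T0ᶜ, |β i| := by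
  classical
  set d : Fin p → ℝ := βt - β with hd
  have hd' : ∀ i, d i = βt i - β i := fun i => rfl
  set u : Fin p → ℝ := fun i => |d i| with hu
  -- sorted list of T0ᶜ by decreasing |d|
  set r : Fin p → Fin p → Prop := fun a b => |d b| ≤ |d a| with hr
  haveI : DecidableRel r := fun a b => Real.decidableLE _ _
  haveI hrtot : IsTotal (Fin p) r := ⟨fun a b => le_total |d b| |d a|⟩
  haveI hrtrans : IsTrans (Fin p) r := ⟨fun a b c hab hbc => le_trans hbc hab⟩
  set L : List (Fin p) := List.insertionSort r T0ᶜ.toList with hL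
  have hLperm : List.Perm L T0ᶜ.toList := List.perm_insertionSort r _
  have hLnd : L.Nodup := hLperm.nodup_iff.2 (Finset.nodup_toList _)
  have hLmem : ∀ i, i ∈ L ↔ i ∈ T0ᶜ := fun i => hLperm.mem_iff.trans (Finset.mem_toList)
  have hLsort : L.Pairwise r := List.pairwise_insertionSort r _
  have hLfin : L.toFinset = T0ᶜ := by ext i; simp [List.mem_toFinset, hLmem i]
  -- take/drop disjointness
  have hnd2 : (L.take S ++ L.drop S).Nodup := by rw [List.take_append_drop]; exact hLnd
  have hdisj := (List.nodup_append.1 hnd2).2.2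
  -- sets
  set B0 : Finset (Fin p) := (L.take S).toFinset with hB0
  set T01 : Finset (Fin p) := T0 ∪ B0 with hT01
  set w : Fin p → ℝ := fun i => if i ∈ T01 then d i else 0 with hw
  set z : Fin p → ℝ := dsRestrict d (L.drop S) with hz
  have hT01card : T01.card ≤ 2 * S := by
    calc T01.card ≤ T0.card + B0.card := Finset.card_union_le _ _
      _ ≤ S + S := by
          apply add_le_add (le_of_eq hT0card)
          exact le_trans (List.toFinset_card_le _) (by simpa using List.length_take_le S L)
      _ = 2 * S := by ring
  have hdropT01 : ∀ x ∈ L.drop S, x ∉ T01 := by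
    intro x hx hmem
    rcases Finset.mem_union.1 hmem with h1 | h1
    · have : x ∈ T0ᶜ := (hLmem x).1 (List.mem_of_mem_drop hx)
      exact (Finset.mem_compl.1 this) h1
    · exact hdisj x (List.mem_toFinset.1 h1) x hx rfl
  -- decomposition d = w + z
  have hdecomp : ∀ i, d i = w i + z i := by
    intro i
    by_cases hi : i ∈ T01
    · have hzi : z i = 0 := by
        simp only [hz, dsRestrict]
        rw [if_neg (fun hc => hdropT01 i hc hi)]
      simp [hw, hi, hzi]
    · have hi0 : i ∉ T0 := fun hc => hi (Finset.mem_union.2 (Or.inl hc))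
      have hiL : i ∈ L := (hLmem i).2 (Finset.mem_compl.2 hi0)
      have hitake : i ∉ L.take S := fun hc => hi (Finset.mem_union.2 (Or.inr (List.mem_toFinset.2 hc)))
      have hidrop : i ∈ L.drop S := by
        have := (List.mem_append.1 (by rw [List.take_append_drop]; exact hiL :
          i ∈ L.take S ++ L.drop S))
        rcases this with h | h
        · exact absurd h hitake
        · exact h
      simp [hw, hz, dsRestrict, hi, hidrop]
  -- key scalars
  set A : ℝ := Real.sqrt (∑ i, w i ^ 2) with hA
  set K : ℝ := dsBlockSum u S (L.drop S) with hK
  set N : ℝ := ∑ i ∈ T0ᶜ, |d i| with hN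
  set E : ℝ := ∑ i ∈ T0ᶜ, |β i| with hE
  have hA0 : 0 ≤ A := Real.sqrt_nonneg _
  have hK0 : 0 ≤ K := dsBlockSum_nonneg _ _ _
  have hE0 : 0 ≤ E := Finset.sum_nonneg (fun i _ => abs_nonneg _)
  have hwsq : ∑ i, w i ^ 2 = ∑ i ∈ T01, d i ^ 2 := ds_sum_ite_sq T01 d
  have hAsq : A ^ 2 = ∑ i, w i ^ 2 := Real.sq_sqrt (Finset.sum_nonneg (fun i _ => sq_nonneg _))
  -- Step: correlation bound ‖XᵀXd‖∞ ≤ 2λσ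
  set g : Fin p → ℝ := Xtᵀ.mulVec (Xt.mulVec d) with hg
  have hgbound : ∀ i, |g i| ≤ 2 * (lam * σ) := by
    intro i
    have hXd : Xt.mulVec d = eN - (y - Xt.mulVec βt) := by
      rw [hy, hd]
      rw [Matrix.mulVec_sub]
      funext j
      simp only [Pi.sub_apply, Pi.add_apply]
      ring
    have : g = Xtᵀ.mulVec eN - Xtᵀ.mulVec (y - Xt.mulVec βt) := by
      rw [hg, hXd, Matrix.mulVec_sub]
    rw [this]
    calc |(Xtᵀ.mulVec eN - Xtᵀ.mulVec (y - Xt.mulVec βt)) i|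
        ≤ |Xtᵀ.mulVec eN i| + |Xtᵀ.mulVec (y - Xt.mulVec βt) i| := abs_sub _ _
      _ ≤ lam * σ + lam * σ := add_le_add (hnoise i) (hfeas i)
      _ = 2 * (lam * σ) := by ring
  -- inner product identities
  have hinner : ∀ v : Fin p → ℝ,
      ∑ j, Xt.mulVec v j * Xt.mulVec w j = ∑ j, (Xt.mulVec v) j * (Xt.mulVec w) j := fun _ => rfl
  have hid : ∑ j, Xt.mulVec d j * Xt.mulVec w j = ∑ i, g i * w i := by
    have h1 : (∑ j, Xt.mulVec d j * Xt.mulVec w j) = (Xt.mulVec d) ⬝ᵥ (Xt.mulVec w) := rfl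
    have h2 : (∑ i, g i * w i) = g ⬝ᵥ w := rfl
    rw [h1, h2, Matrix.dotProduct_mulVec, hg, Matrix.mulVec_transpose]
  have hQdw : ∑ j, Xt.mulVec d j * Xt.mulVec w j ≤ 2 * (lam * σ) * ∑ i ∈ T01, |d i| := by
    rw [hid]
    have h1 : ∑ i, g i * w i = ∑ i ∈ T01, g i * d i := ds_sum_ite_mul T01 g d
    rw [h1]
    calc ∑ i ∈ T01, g i * d i ≤ ∑ i ∈ T01, 2 * (lam * σ) * |d i| := by
          apply Finset.sum_le_sum
          intro i _
          calc g i * d i ≤ |g i * d i| := le_abs_self _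
            _ = |g i| * |d i| := abs_mul _ _
            _ ≤ 2 * (lam * σ) * |d i| :=
                mul_le_mul_of_nonneg_right (hgbound i) (abs_nonneg _)
      _ = 2 * (lam * σ) * ∑ i ∈ T01, |d i| := by rw [Finset.mul_sum]
  -- CS on T01
  have hcs1 : ∑ i ∈ T01, |d i| ≤ Real.sqrt (2 * S) * A := by
    calc ∑ i ∈ T01, |d i| ≤ Real.sqrt T01.card * Real.sqrt (∑ i ∈ T01, d i ^ 2) :=
          ds_cs_l1 T01 d
      _ ≤ Real.sqrt (2 * S) * A := by
          rw [← hwsq, ← hA]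
          apply mul_le_mul_of_nonneg_right _ hA0
          apply Real.sqrt_le_sqrt
          exact_mod_cast hT01card
  -- off-block correlation
  have hzw : |∑ j, Xt.mulVec z j * Xt.mulVec w j| ≤ θ * K * A := by
    rw [hz, hK]
    apply dsInner_bound Xt d w hS θ A T01
    · intro b T hTdisj hTcard hbsupp
      exact hRO b w T T01 hTdisj hTcard hT01card hbsupp
        (fun i hi => by simp only [hw]; rw [if_neg hi])
    · exact hLnd.sublist (List.drop_sublist _ _)
    · exact hdropT01
  -- RIP lower bound
  have hRIPlow : (1 - δ) * ∑ i, w i ^ 2 ≤ ∑ j, (Xt.mulVec w j) ^ 2 := by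
    apply (hRIP w _).1
    apply le_trans (Finset.card_le_card _) hT01card
    intro i hi
    simp only [Finset.mem_filter] at hi
    by_contra hc
    exact hi.2 (by simp only [hw]; rw [if_neg hc])
  -- energy identity
  have hQww : ∑ j, (Xt.mulVec w j) ^ 2
      = (∑ j, Xt.mulVec d j * Xt.mulVec w j) - ∑ j, Xt.mulVec z j * Xt.mulVec w j := by
    have hdwz : Xt.mulVec d = Xt.mulVec w + Xt.mulVec z := by
      rw [show d = w + z from funext hdecomp, Matrix.mulVec_add]
    rw [hdwz]
    rw [← Finset.sum_sub_distrib]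
    apply Finset.sum_congr rfl
    intro j _
    simp only [Pi.add_apply]
    ring
  -- cone constraint
  have hfeasβ : ∀ i, |Xtᵀ.mulVec (y - Xt.mulVec β) i| ≤ lam * σ := by
    intro i
    have : y - Xt.mulVec β = eN := by rw [hy]; funext j; simp
    rw [this]; exact hnoise i
  have hl1 : ∑ i, |βt i| ≤ ∑ i, |β i| := hmin β hfeasβ
  have hcone : N ≤ (∑ i ∈ T0, |d i|) + 2 * E := by
    have hsplit : ∀ f : Fin p → ℝ, ∑ i, f i = ∑ i ∈ T0, f i + ∑ i ∈ T0ᶜ, f i :=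
      fun f => (Finset.sum_add_sum_compl T0 f).symm
    have h1 : ∑ i ∈ T0, (|β i| - |d i|) ≤ ∑ i ∈ T0, |βt i| := by
      apply Finset.sum_le_sum
      intro i _
      have : βt i = β i + d i := by rw [hd' i]; ring
      rw [this]
      have h2 := abs_add_le (β i + d i) (-(d i))
      rw [abs_neg] at h2
      have h3 : β i + d i + -(d i) = β i := by ring
      rw [h3] at h2
      linarith
    have h2 : ∑ i ∈ T0ᶜ, (|d i| - |β i|) ≤ ∑ i ∈ T0ᶜ, |βt i| := by
      apply Finset.sum_le_sum
      intro i _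
      have : βt i = β i + d i := by rw [hd' i]; ring
      rw [this]
      have h2 := abs_add_le (β i + d i) (-(β i))
      rw [abs_neg] at h2
      have h3 : β i + d i + -(β i) = d i := by ring
      rw [h3] at h2
      linarith
    rw [Finset.sum_sub_distrib] at h1 h2
    have e1 := hsplit (fun i => |βt i|)
    have e2 := hsplit (fun i => |β i|)
    rw [hN, hE]
    linarith
  -- CS on T0
  have hcs2 : ∑ i ∈ T0, |d i| ≤ Real.sqrt S * A := by
    calc ∑ i ∈ T0, |d i| ≤ Real.sqrt T0.card * Real.sqrt (∑ i ∈ T0, d i ^ 2) := ds_cs_l1 T0 d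
      _ ≤ Real.sqrt S * A := by
          apply mul_le_mul
          · exact Real.sqrt_le_sqrt (by rw [hT0card])
          · rw [hA]
            apply Real.sqrt_le_sqrt
            rw [hwsq]
            apply Finset.sum_le_sum_of_subset_of_nonneg (Finset.subset_union_left)
            intro i _ _
            exact sq_nonneg _
          · exact Real.sqrt_nonneg _
          · exact Real.sqrt_nonneg _
  -- shifting bound
  have hKN : K * Real.sqrt S ≤ N := by
    have := dsBlockSum_le u (fun i => abs_nonneg _) hS L hLsort
    rw [← hK] at this
    apply le_trans this
    have : (L.map u).sum = ∑ i ∈ T0ᶜ, u i := by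
      rw [← hLfin, List.sum_toFinset _ hLnd]
    rw [hN, this]
  -- total norm bound
  have hlhs : Real.sqrt (∑ i, d i ^ 2) ≤ A + K := by
    have hsq : ∑ i, d i ^ 2 = (∑ i, w i ^ 2) + ∑ i, z i ^ 2 := by
      rw [← Finset.sum_add_distrib]
      apply Finset.sum_congr rfl
      intro i _
      by_cases hi : i ∈ T01
      · have hzi : z i = 0 := by
          simp only [hz, dsRestrict]
          rw [if_neg (fun hc => hdropT01 i hc hi)]
        have hwi : w i = d i := by simp [hw, hi]
        rw [hzi, hwi]; ring
      · have hwi : w i = 0 := by simp [hw, hi]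
        have hzi : z i = d i := by
          have := hdecomp i
          rw [hwi] at this
          linarith
        rw [hzi, hwi]; ring
    have hzK : Real.sqrt (∑ i, z i ^ 2) ≤ K := by
      rw [hz, dsRestrict_sumsq d (hLnd.sublist (List.drop_sublist _ _))]
      rw [hK]
      exact dsBlockSum_ge u hS (L.drop S)
    calc Real.sqrt (∑ i, d i ^ 2)
        ≤ Real.sqrt (∑ i, w i ^ 2) + Real.sqrt (∑ i, z i ^ 2) := by
          rw [hsq]
          exact my_sqrt_add_le _ _ (Finset.sum_nonneg fun i _ => sq_nonneg _)
            (Finset.sum_nonneg fun i _ => sq_nonneg _)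
      _ ≤ A + K := add_le_add (le_of_eq rfl) hzK
  -- positivity
  have hsq2 : Real.sqrt (2 * (S:ℝ)) = Real.sqrt 2 * Real.sqrt S := Real.sqrt_mul (by norm_num) _
  have hspos : (0:ℝ) < Real.sqrt S := Real.sqrt_pos.2 (by exact_mod_cast hS)
  have hcpos : (0:ℝ) < 1 - δ - θ := by linarith
  set s : ℝ := Real.sqrt S with hs
  -- main inequality chain
  have hmain : (1 - δ) * (A * A) ≤ (2 * (lam * σ) * (Real.sqrt 2 * s) + θ * K) * A := by
    have h1 : (1 - δ) * (A * A) ≤ ∑ j, (Xt.mulVec w j) ^ 2 := by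
      have : A * A = ∑ i, w i ^ 2 := by rw [← sq, hAsq]
      rw [this]; exact hRIPlow
    have h2 : ∑ j, (Xt.mulVec w j) ^ 2
        ≤ 2 * (lam * σ) * (Real.sqrt (2 * S) * A) + θ * K * A := by
      rw [hQww]
      have h3 : -(∑ j, Xt.mulVec z j * Xt.mulVec w j) ≤ θ * K * A :=
        le_trans (neg_le_abs _) hzw
      have h4 : ∑ j, Xt.mulVec d j * Xt.mulVec w j ≤ 2 * (lam * σ) * (Real.sqrt (2 * S) * A) := by
        apply le_trans hQdw
        apply mul_le_mul_of_nonneg_left hcs1 (by positivity)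
      linarith
    calc (1 - δ) * (A * A) ≤ 2 * (lam * σ) * (Real.sqrt (2 * S) * A) + θ * K * A := h1.trans h2
      _ = (2 * (lam * σ) * (Real.sqrt 2 * s) + θ * K) * A := by
          rw [show Real.sqrt (2 * (S:ℝ)) = Real.sqrt 2 * s from hsq2]; ring
  have hKbound : K ≤ A + 2 * E / s := by
    have hNbound : N ≤ s * A + 2 * E := by linarith [hcone, hcs2]
    have h1 : K * s ≤ s * A + 2 * E := le_trans hKN hNbound
    rw [show A + 2 * E / s = (s * A + 2 * E) / s by field_simp]
    rw [le_div_iff₀ hspos]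
    exact h1
  have hAbound : (1 - δ - θ) * A ≤ 2 * Real.sqrt 2 * s * (lam * σ) + 2 * θ * E / s := by
    rcases eq_or_lt_of_le hA0 with hA0' | hApos
    · rw [← hA0']
      have : (0:ℝ) ≤ 2 * Real.sqrt 2 * s * (lam * σ) + 2 * θ * E / s := by positivity
      linarith
    · have h1 : (1 - δ) * A ≤ 2 * (lam * σ) * (Real.sqrt 2 * s) + θ * K := by
        have := hmain
        have h2 : ((1 - δ) * A) * A ≤ (2 * (lam * σ) * (Real.sqrt 2 * s) + θ * K) * A := by
          linarith [hmain]
        exact le_of_mul_le_mul_right h2 hApos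
      have h2 : θ * K ≤ θ * (A + 2 * E / s) := mul_le_mul_of_nonneg_left hKbound hθ0
      have h3 : θ * (2 * E / s) = 2 * θ * E / s := by ring
      calc (1 - δ - θ) * A = (1 - δ) * A - θ * A := by ring
        _ ≤ 2 * (lam * σ) * (Real.sqrt 2 * s) + θ * K - θ * A := by linarith
        _ ≤ 2 * (lam * σ) * (Real.sqrt 2 * s) + θ * (A + 2 * E / s) - θ * A := by linarith
        _ = 2 * Real.sqrt 2 * s * (lam * σ) + 2 * θ * E / s := by ring
  -- conclude
  have hdgoal : ∑ i, (βt i - β i) ^ 2 = ∑ i, d i ^ 2 := by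
    apply Finset.sum_congr rfl
    intro i _
    rw [hd' i]
  rw [hdgoal]
  have hfinal : Real.sqrt (∑ i, d i ^ 2) ≤ 2 * A + 2 * E / s := by
    calc Real.sqrt (∑ i, d i ^ 2) ≤ A + K := hlhs
      _ ≤ A + (A + 2 * E / s) := by linarith [hKbound]
      _ = 2 * A + 2 * E / s := by ring
  have hA2 : A ≤ (2 * Real.sqrt 2 * s * (lam * σ) + 2 * θ * E / s) / (1 - δ - θ) := by
    rw [le_div_iff₀ hcpos]
    linarith [hAbound]
  calc Real.sqrt (∑ i, d i ^ 2) ≤ 2 * A + 2 * E / s := hfinal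
    _ ≤ 2 * ((2 * Real.sqrt 2 * s * (lam * σ) + 2 * θ * E / s) / (1 - δ - θ)) + 2 * E / s := by
        linarith [hA2]
    _ = (4 * Real.sqrt 2 / (1 - δ - θ)) * s * (lam * σ)
        + 2 * ((1 - δ + θ) / (1 - δ - θ)) * s⁻¹ * E := by
        field_simp
        ring
    _ = _ := by rw [hs, hE]
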